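/- The constant trajectories satisfy V(λt. true) = 1 and V(λt. false) = 3, and the unique maximizer x* of V satisfies x*(0) = true. Consequently, since the optimization problem faced at every time step is identical to the one at time 0, an agent that at each step executes the first action of the currently optimal plan plays at every step, realizing the trajectory λt. true with value V(λt. true) = 1, which is strictly less than V(λt. false) = 3, which in turn is strictly less than the optimal value 16/5. -/
import Mathlib


open scoped BigOperators

/-- Reward at time `t` in the Procrastinator's Peril: playing (`true`) yields
`(1/2)^(t+1)` and working (`false`) yields `(3/10)·(9/10)^t`. -/
noncomputable def ppReward (t : ℕ) (b : Bool) : ℝ :=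
  if b then (1 / 2 : ℝ) ^ (t + 1) else (3 / 10 : ℝ) * (9 / 10 : ℝ) ^ t

/-- Total value of a trajectory `x : ℕ → Bool` in the Procrastinator's Peril. -/
noncomputable def ppValue (x : ℕ → Bool) : ℝ :=
  ∑' t, ppReward t (x t)

noncomputable def ppOpt : ℕ → Bool := fun t => t = 0

lemma ppReward_nonneg (t : ℕ) (b : Bool) : 0 ≤ ppReward t b := by
  unfold ppReward; cases b <;> simp <;> positivity

lemma ppReward_le (t : ℕ) (b : Bool) : ppReward t b ≤ (9/10 : ℝ) ^ t := by
  unfold ppReward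
  cases b <;> simp only [if_true, if_false, Bool.false_eq_true]
  · nlinarith [pow_nonneg (by norm_num : (0:ℝ) ≤ 9/10) t]
  · calc (1/2 : ℝ) ^ (t+1) ≤ (1/2 : ℝ) ^ t := by
          apply pow_le_pow_of_le_one <;> norm_num
      _ ≤ (9/10 : ℝ) ^ t := by
          apply pow_le_pow_left₀ <;> norm_num

lemma ppSummable (x : ℕ → Bool) : Summable (fun t => ppReward t (x t)) := by
  apply Summable.of_nonneg_of_le (fun t => ppReward_nonneg t (x t))
    (fun t => ppReward_le t (x t))
  exact summable_geometric_of_lt_one (by norm_num) (by norm_num)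

lemma pp_lt (t : ℕ) (ht : 1 ≤ t) : (1/2 : ℝ) ^ (t+1) < (3/10 : ℝ) * (9/10 : ℝ) ^ t := by
  induction t with
  | zero => omega
  | succ n ih =>
    rcases Nat.eq_or_lt_of_le ht with h | h
    · norm_num [← h]
    · have := ih (by omega)
      rw [pow_succ, pow_succ ((9:ℝ)/10)]
      nlinarith [pow_nonneg (by norm_num : (0:ℝ) ≤ 1/2) (n+1)]

lemma ppReward_le_opt (t : ℕ) (b : Bool) : ppReward t b ≤ ppReward t (ppOpt t) := by
  rcases Nat.eq_zero_or_pos t with h | h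
  · subst h
    cases b <;> simp [ppReward, ppOpt] <;> norm_num
  · have h1 : ppOpt t = false := by simp [ppOpt]; omega
    rw [h1]
    cases b
    · rfl
    · exact le_of_lt (by simpa [ppReward] using pp_lt t h)

lemma ppReward_lt_opt (t : ℕ) (b : Bool) (hb : b ≠ ppOpt t) :
    ppReward t b < ppReward t (ppOpt t) := by
  rcases Nat.eq_zero_or_pos t with h | h
  · subst h
    have : b = false := by revert hb; cases b <;> simp [ppOpt]
    rw [this]; simp [ppReward, ppOpt]; norm_num
  · have h1 : ppOpt t = false := by simp [ppOpt]; omega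
    have : b = true := by rw [h1] at hb; revert hb; cases b <;> simp
    rw [this, h1]
    simpa [ppReward] using pp_lt t h

lemma ppOpt_max (x : ℕ → Bool) : ppValue x ≤ ppValue ppOpt :=
  Summable.tsum_le_tsum (fun t => ppReward_le_opt t (x t)) (ppSummable x) (ppSummable ppOpt)

lemma ppOpt_strict (x : ℕ → Bool) (hx : x ≠ ppOpt) : ppValue x < ppValue ppOpt := by
  obtain ⟨t, ht⟩ : ∃ t, x t ≠ ppOpt t := by
    by_contra h; push_neg at h; exact hx (funext h)
  exact Summable.tsum_lt_tsum (fun s => ppReward_le_opt s (x s)) (ppReward_lt_opt t (x t) ht)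
    (ppSummable x) (ppSummable ppOpt)

lemma pp_true : ppValue (fun _ => true) = 1 := by
  unfold ppValue ppReward
  have e : ∀ t : ℕ, (if (true:Bool) = true then (1/2 : ℝ) ^ (t+1) else (3/10 : ℝ) * (9/10:ℝ)^t) = (1/2 : ℝ)^(t+1) := by intro t; simp
  rw [tsum_congr e]
  have : ∀ t : ℕ, (1/2 : ℝ) ^ (t+1) = (1/2 : ℝ) ^ t * (1/2) := fun t => pow_succ _ _
  rw [tsum_congr this, tsum_mul_right, tsum_geometric_of_lt_one (by norm_num) (by norm_num)]
  norm_num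

lemma pp_false : ppValue (fun _ => false) = 3 := by
  unfold ppValue ppReward
  have e : ∀ t : ℕ, (if (false:Bool) = true then (1/2 : ℝ) ^ (t+1) else (3/10 : ℝ) * (9/10:ℝ)^t) = (3/10 : ℝ) * (9/10:ℝ)^t := by intro t; simp
  rw [tsum_congr e]
  rw [tsum_mul_left, tsum_geometric_of_lt_one (by norm_num) (by norm_num)]
  norm_num

/-- **The Procrastinator's Peril: perpetual procrastination.** Always playing has value
`1`, always working has value `3`, there is a unique maximizer of the value, the
(unique) maximizer plays at time `0`; consequently the greedy agent — who at each of
the identical decision problems executes the first action of the currently optimal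
plan — plays forever, realizing value `1`, which is strictly less than the value `3`
of always working, itself strictly less than the optimal value `16/5`. -/
theorem procrastinators_peril :
    ppValue (fun _ => true) = 1 ∧
    ppValue (fun _ => false) = 3 ∧
    (∃! xstar : ℕ → Bool, ∀ x, ppValue x ≤ ppValue xstar) ∧
    (∀ xstar : ℕ → Bool, (∀ x, ppValue x ≤ ppValue xstar) → xstar 0 = true) ∧
    ppValue (fun _ => true) < ppValue (fun _ => false) ∧
    ppValue (fun _ => false) < 16 / 5 := by
  have huniq : ∀ xstar : ℕ → Bool, (∀ x, ppValue x ≤ ppValue xstar) → xstar = ppOpt := by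
    intro y hy
    by_contra h
    exact absurd (hy ppOpt) (not_le.mpr (ppOpt_strict y h))
  have hopt16 : ppValue ppOpt = 16/5 := by
    unfold ppValue
    rw [Summable.tsum_eq_zero_add (ppSummable ppOpt)]
    have h0 : ppReward 0 (ppOpt 0) = 1/2 := by norm_num [ppReward, ppOpt]
    have h1 : ∀ n : ℕ, ppReward (n+1) (ppOpt (n+1)) = (3/10 : ℝ) * (9/10 : ℝ)^n * (9/10) := by
      intro n
      simp [ppReward, ppOpt, pow_succ]
      ring
    rw [h0, tsum_congr h1, tsum_mul_right, tsum_mul_left,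
      tsum_geometric_of_lt_one (by norm_num) (by norm_num)]
    norm_num
  refine ⟨pp_true, pp_false, ⟨ppOpt, ppOpt_max, huniq⟩, ?_, ?_, ?_⟩
  · intro y hy; rw [huniq y hy]; rfl
  · rw [pp_true, pp_false]; norm_num
  · rw [pp_false] at *
    have := ppOpt_strict (fun _ => false) (by
      intro h
      have := congrFun h 0
      simp [ppOpt] at this)
    rw [pp_false] at this
    linarith [hopt16 ▸ this]
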